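/- The restriction of an extremal representation to a reducing subspace is extremal: if φ: A → B(H) is extremal and M ⊆ H reduces φ(A), then φ|_M is extremal. -/

import Mathlib

universe u v

/-- A representation `φ : A → B(H)` is *extremal* if for every representation
`ψ : A → B(K)` on a Hilbert space `K` containing `H` (via a linear isometry `V`) such
that `V(H)` is invariant for `ψ` and `ψ` restricts to `φ` there (a *lifting*), the
subspace `V(H)` in fact reduces `ψ(A)`, i.e. it is also invariant for every `ψ(a)*`. -/
def IsExtremal {A : Type v} [NonUnitalRing A] [Module ℂ A]
    {H : Type u} [NormedAddCommGroup H] [InnerProductSpace ℂ H] [CompleteSpace H]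
    (φ : A →ₙₐ[ℂ] (H →L[ℂ] H)) : Prop :=
  ∀ (K : Type u) (_ : NormedAddCommGroup K) (_ : InnerProductSpace ℂ K)
    (_ : CompleteSpace K) (ψ : A →ₙₐ[ℂ] (K →L[ℂ] K)) (V : H →ₗᵢ[ℂ] K),
    (∀ (a : A) (h : H), ψ a (V h) = V (φ a h)) →
    ∀ (a : A) (h : H), ∃ h' : H, star (ψ a) (V h) = V h'

variable {A : Type v} [NonUnitalRing A] [Module ℂ A]

/-- Restriction of a representation to an invariant closed subspace. -/
noncomputable def restrictRep {H : Type u} [NormedAddCommGroup H] [InnerProductSpace ℂ H]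
    (φ : A →ₙₐ[ℂ] (H →L[ℂ] H)) (N : Submodule ℂ H)
    (hinv : ∀ a : A, ∀ x ∈ N, φ a x ∈ N) : A →ₙₐ[ℂ] (↥N →L[ℂ] ↥N) where
  toFun a := ContinuousLinearMap.codRestrict ((φ a).comp N.subtypeL) N (fun x => hinv a x x.2)
  map_add' a b := ContinuousLinearMap.ext fun x => Subtype.ext <| by simp; rfl
  map_mul' a b := ContinuousLinearMap.ext fun x => Subtype.ext <| by simp; rfl
  map_smul' c a := ContinuousLinearMap.ext fun x => Subtype.ext <| by simp; rfl
  map_zero' := ContinuousLinearMap.ext fun x => Subtype.ext <| by simp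

@[simp] lemma restrictRep_coe {H : Type u} [NormedAddCommGroup H] [InnerProductSpace ℂ H]
    (φ : A →ₙₐ[ℂ] (H →L[ℂ] H)) (N : Submodule ℂ H)
    (hinv : ∀ a : A, ∀ x ∈ N, φ a x ∈ N) (a : A) (x : ↥N) :
    ((restrictRep φ N hinv a x : ↥N) : H) = φ a (x : H) := rfl

/-- Direct sum of two representations on the `L²` product. -/
noncomputable def prodRep {K : Type u} {N : Type u}
    [NormedAddCommGroup K] [InnerProductSpace ℂ K]
    [NormedAddCommGroup N] [InnerProductSpace ℂ N]
    (ψ : A →ₙₐ[ℂ] (K →L[ℂ] K)) (ρ : A →ₙₐ[ℂ] (N →L[ℂ] N)) :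
    A →ₙₐ[ℂ] (WithLp 2 (K × N) →L[ℂ] WithLp 2 (K × N)) where
  toFun a := (((WithLp.prodContinuousLinearEquiv 2 ℂ K N).symm.toContinuousLinearMap.comp
      ((ψ a).prodMap (ρ a))).comp
      (WithLp.prodContinuousLinearEquiv 2 ℂ K N).toContinuousLinearMap)
  map_add' a b := ContinuousLinearMap.ext fun x => by
    apply (WithLp.prodContinuousLinearEquiv 2 ℂ K N).injective
    simp [Prod.ext_iff]
  map_mul' a b := ContinuousLinearMap.ext fun x => by
    apply (WithLp.prodContinuousLinearEquiv 2 ℂ K N).injective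
    simp [Prod.ext_iff]
  map_smul' c a := ContinuousLinearMap.ext fun x => by
    apply (WithLp.prodContinuousLinearEquiv 2 ℂ K N).injective
    simp [Prod.ext_iff]
  map_zero' := ContinuousLinearMap.ext fun x => by
    apply (WithLp.prodContinuousLinearEquiv 2 ℂ K N).injective
    simp [Prod.ext_iff]

lemma prodRep_apply {K : Type u} {N : Type u}
    [NormedAddCommGroup K] [InnerProductSpace ℂ K]
    [NormedAddCommGroup N] [InnerProductSpace ℂ N]
    (ψ : A →ₙₐ[ℂ] (K →L[ℂ] K)) (ρ : A →ₙₐ[ℂ] (N →L[ℂ] N)) (a : A) (x : WithLp 2 (K × N)) :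
    prodRep ψ ρ a x = (WithLp.prodContinuousLinearEquiv 2 ℂ K N).symm
      (ψ a ((WithLp.prodContinuousLinearEquiv 2 ℂ K N) x).1,
       ρ a ((WithLp.prodContinuousLinearEquiv 2 ℂ K N) x).2) := rfl

lemma prodRep_star {K : Type u} {N : Type u}
    [NormedAddCommGroup K] [InnerProductSpace ℂ K] [CompleteSpace K]
    [NormedAddCommGroup N] [InnerProductSpace ℂ N] [CompleteSpace N]
    (ψ : A →ₙₐ[ℂ] (K →L[ℂ] K)) (ρ : A →ₙₐ[ℂ] (N →L[ℂ] N)) (a : A) (x : WithLp 2 (K × N)) :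
    star (prodRep ψ ρ a) x = (WithLp.prodContinuousLinearEquiv 2 ℂ K N).symm
      (star (ψ a) ((WithLp.prodContinuousLinearEquiv 2 ℂ K N) x).1,
       star (ρ a) ((WithLp.prodContinuousLinearEquiv 2 ℂ K N) x).2) := by
  have : star (prodRep ψ ρ a) =
      (((WithLp.prodContinuousLinearEquiv 2 ℂ K N).symm.toContinuousLinearMap.comp
        ((star (ψ a)).prodMap (star (ρ a)))).comp
        (WithLp.prodContinuousLinearEquiv 2 ℂ K N).toContinuousLinearMap) := by
    rw [ContinuousLinearMap.star_eq_adjoint]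
    symm
    rw [ContinuousLinearMap.eq_adjoint_iff]
    intro u v
    calc (inner ℂ ((((WithLp.prodContinuousLinearEquiv 2 ℂ K N).symm.toContinuousLinearMap.comp
        ((star (ψ a)).prodMap (star (ρ a)))).comp
        (WithLp.prodContinuousLinearEquiv 2 ℂ K N).toContinuousLinearMap) u) v : ℂ)
        = inner ℂ (star (ψ a) ((WithLp.prodContinuousLinearEquiv 2 ℂ K N) u).1)
            ((WithLp.prodContinuousLinearEquiv 2 ℂ K N) v).1
          + inner ℂ (star (ρ a) ((WithLp.prodContinuousLinearEquiv 2 ℂ K N) u).2)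
            ((WithLp.prodContinuousLinearEquiv 2 ℂ K N) v).2 := rfl
      _ = inner ℂ ((WithLp.prodContinuousLinearEquiv 2 ℂ K N) u).1
            (ψ a ((WithLp.prodContinuousLinearEquiv 2 ℂ K N) v).1)
          + inner ℂ ((WithLp.prodContinuousLinearEquiv 2 ℂ K N) u).2
            (ρ a ((WithLp.prodContinuousLinearEquiv 2 ℂ K N) v).2) := by
          rw [ContinuousLinearMap.star_eq_adjoint, ContinuousLinearMap.star_eq_adjoint,
            ContinuousLinearMap.adjoint_inner_left, ContinuousLinearMap.adjoint_inner_left]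
      _ = inner ℂ u (prodRep ψ ρ a v) := rfl
  rw [this]
  rfl

/-- Embedding of `H` as `V(M) ⊕ Mᗮ` inside `K ⊕ Mᗮ`. -/
noncomputable def embedIso {H : Type u} [NormedAddCommGroup H] [InnerProductSpace ℂ H]
    [CompleteSpace H] (M : Submodule ℂ H) [CompleteSpace ↥M]
    {K : Type u} [NormedAddCommGroup K] [InnerProductSpace ℂ K]
    (V : ↥M →ₗᵢ[ℂ] K) : H →ₗᵢ[ℂ] WithLp 2 (K × ↥Mᗮ) where
  toLinearMap :=
  { toFun := fun h => (WithLp.prodContinuousLinearEquiv 2 ℂ K ↥Mᗮ).symm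
      (V (M.orthogonalProjectionOnto h), Mᗮ.orthogonalProjectionOnto h)
    map_add' := fun x y => by
      rw [map_add (M.orthogonalProjectionOnto), map_add (Mᗮ.orthogonalProjectionOnto), map_add V,
        ← map_add ((WithLp.prodContinuousLinearEquiv 2 ℂ K ↥Mᗮ).symm)]
      rfl
    map_smul' := fun c x => by
      rw [map_smul (M.orthogonalProjectionOnto), map_smul (Mᗮ.orthogonalProjectionOnto), map_smul V,
        ← map_smul ((WithLp.prodContinuousLinearEquiv 2 ℂ K ↥Mᗮ).symm)]
      rfl }
  norm_map' := by
    intro h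
    rw [← sq_eq_sq₀ (norm_nonneg _) (norm_nonneg _)]
    have h1 : ‖(WithLp.prodContinuousLinearEquiv 2 ℂ K ↥Mᗮ).symm
        (V (M.orthogonalProjectionOnto h), Mᗮ.orthogonalProjectionOnto h)‖ ^ 2
        = ‖V (M.orthogonalProjectionOnto h)‖ ^ 2
          + ‖(Mᗮ.orthogonalProjectionOnto h : ↥Mᗮ)‖ ^ 2 := by
      have := WithLp.prod_norm_sq_eq_of_L2
        ((WithLp.equiv 2 (K × ↥Mᗮ)).symm
          (V (M.orthogonalProjectionOnto h), Mᗮ.orthogonalProjectionOnto h))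
      simpa using this
    show ‖(WithLp.prodContinuousLinearEquiv 2 ℂ K ↥Mᗮ).symm
        (V (M.orthogonalProjectionOnto h), Mᗮ.orthogonalProjectionOnto h)‖ ^ 2 = ‖h‖ ^ 2
    rw [h1, V.norm_map, ← M.norm_sq_eq_add_norm_sq_projection h]

lemma embedIso_apply {H : Type u} [NormedAddCommGroup H] [InnerProductSpace ℂ H]
    [CompleteSpace H] (M : Submodule ℂ H) [CompleteSpace ↥M]
    {K : Type u} [NormedAddCommGroup K] [InnerProductSpace ℂ K]
    (V : ↥M →ₗᵢ[ℂ] K) (h : H) :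
    embedIso M V h = (WithLp.prodContinuousLinearEquiv 2 ℂ K ↥Mᗮ).symm
      (V (M.orthogonalProjectionOnto h), Mᗮ.orthogonalProjectionOnto h) := rfl

/-- The restriction of an extremal representation to a reducing
subspace is extremal: if `φ : A → B(H)` is extremal and the closed subspace `M ⊆ H`
reduces `φ(A)`, then `φ|_M` is extremal. -/
theorem restriction_of_extremal_to_reducing_is_extremal
    {A : Type v} [NonUnitalRing A] [Module ℂ A]
    {H : Type u} [NormedAddCommGroup H] [InnerProductSpace ℂ H] [CompleteSpace H]
    (φ : A →ₙₐ[ℂ] (H →L[ℂ] H)) (hφ : IsExtremal φ)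
    (M : Submodule ℂ H) (hM : IsClosed (M : Set H)) [CompleteSpace M]
    -- `M` reduces `φ(A)`
    (hred : ∀ a : A, (∀ x ∈ M, φ a x ∈ M) ∧ (∀ x ∈ M, star (φ a) x ∈ M))
    -- `φM` is the restriction of `φ` to `M`
    (φM : A →ₙₐ[ℂ] (M →L[ℂ] M))
    (hres : ∀ (a : A) (x : M), ((φM a x : M) : H) = φ a (x : H)) :
    IsExtremal φM := by
  intro K _ _ _ ψ V hlift a₀ m₀
  -- `Mᗮ` is invariant for `φ`
  have hperp : ∀ (a : A), ∀ x ∈ Mᗮ, φ a x ∈ Mᗮ := by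
    intro a x hx
    rw [Submodule.mem_orthogonal]
    intro y hy
    have h1 : inner ℂ y (φ a x) = (inner ℂ (star (φ a) y) x : ℂ) := by
      rw [ContinuousLinearMap.star_eq_adjoint, ContinuousLinearMap.adjoint_inner_left]
    rw [h1]
    exact (Submodule.mem_orthogonal M x).1 hx _ ((hred a).2 y hy)
  -- projection facts
  have projM : ∀ x : H, x ∈ M →
      ((M.orthogonalProjectionOnto x : M) : H) = x ∧ Mᗮ.orthogonalProjectionOnto x = 0 := by
    intro x hx
    exact ⟨Submodule.starProjection_eq_self_iff.2 hx,
      Submodule.orthogonalProjectionOnto_apply_of_mem_orthogonal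
        (Submodule.le_orthogonal_orthogonal M hx)⟩
  have projN : ∀ x : H, x ∈ Mᗮ →
      M.orthogonalProjectionOnto x = 0 ∧ ((Mᗮ.orthogonalProjectionOnto x : ↥Mᗮ) : H) = x := by
    intro x hx
    exact ⟨Submodule.orthogonalProjectionOnto_apply_of_mem_orthogonal hx,
      Submodule.starProjection_eq_self_iff.2 hx⟩
  -- projections commute with `φ`
  have hPcomm : ∀ (a : A) (h : H),
      ((M.orthogonalProjectionOnto (φ a h) : M) : H) = φ a (M.orthogonalProjectionOnto h) ∧
      ((Mᗮ.orthogonalProjectionOnto (φ a h) : ↥Mᗮ) : H) = φ a (Mᗮ.orthogonalProjectionOnto h) := by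
    intro a h
    have hdecomp : ((M.orthogonalProjectionOnto h : M) : H) + ((Mᗮ.orthogonalProjectionOnto h : ↥Mᗮ) : H) = h :=
        M.starProjection_add_starProjection_orthogonal h
    have h1 : φ a h = φ a ((M.orthogonalProjectionOnto h : M) : H)
        + φ a ((Mᗮ.orthogonalProjectionOnto h : ↥Mᗮ) : H) := by
      rw [← map_add, hdecomp]
    have hm : φ a ((M.orthogonalProjectionOnto h : M) : H) ∈ M :=
      (hred a).1 _ (M.orthogonalProjectionOnto h).2
    have hn : φ a ((Mᗮ.orthogonalProjectionOnto h : ↥Mᗮ) : H) ∈ Mᗮ :=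
      hperp a _ (Mᗮ.orthogonalProjectionOnto h).2
    constructor
    · rw [h1, map_add, Submodule.coe_add, (projM _ hm).1, (projN _ hn).1]
      simp
    · rw [h1, map_add, Submodule.coe_add, (projN _ hn).2, (projM _ hm).2]
      simp
  -- notation
  set E := WithLp.prodContinuousLinearEquiv 2 ℂ K ↥Mᗮ with hE
  have hEembed : ∀ h : H, E (embedIso M V h)
      = (V (M.orthogonalProjectionOnto h), Mᗮ.orthogonalProjectionOnto h) := by
    intro h
    rw [embedIso_apply, hE, ContinuousLinearEquiv.apply_symm_apply]
  -- the lifting property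
  have hlift' : ∀ (a : A) (h : H),
      prodRep ψ (restrictRep φ Mᗮ hperp) a (embedIso M V h) = embedIso M V (φ a h) := by
    intro a h
    apply E.injective
    rw [prodRep_apply, ← hE, ContinuousLinearEquiv.apply_symm_apply, hEembed, hEembed]
    refine Prod.ext ?_ ?_
    · show ψ a (V (M.orthogonalProjectionOnto h)) = V (M.orthogonalProjectionOnto (φ a h))
      rw [hlift]
      congr 1
      exact Subtype.ext (by rw [hres, (hPcomm a h).1])
    · exact Subtype.ext (by
        show ((restrictRep φ Mᗮ hperp a (Mᗮ.orthogonalProjectionOnto h) : ↥Mᗮ) : H)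
          = ((Mᗮ.orthogonalProjectionOnto (φ a h) : ↥Mᗮ) : H)
        rw [restrictRep_coe, (hPcomm a h).2])
  -- apply extremality of `φ`
  obtain ⟨h', hh'⟩ := hφ (WithLp 2 (K × ↥Mᗮ)) inferInstance inferInstance inferInstance
    (prodRep ψ (restrictRep φ Mᗮ hperp)) (embedIso M V) hlift' a₀ (m₀ : H)
  refine ⟨M.orthogonalProjectionOnto h', ?_⟩
  rw [prodRep_star] at hh'
  have key := congrArg E hh'
  rw [← hE, ContinuousLinearEquiv.apply_symm_apply, hEembed, hEembed] at key
  have key1 := congrArg Prod.fst key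
  simp only at key1
  rw [← key1]
  exact congrArg _ (congrArg (⇑V) (Subtype.ext ((projM _ m₀.2).1).symm))
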